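/- Let A be a q×n complex matrix, W a nonzero n×q complex matrix, m a positive integer, and k = max(Ind(AW), Ind(WA)). Then rank(A^{Ⓦ_m,W,†}) = rank(W·A^{D,W}) = rank((WA)^k), where A^{Ⓦ_m,W,†} = W·A^{Ⓦ_m,W}·W·A·A^†. -/
import Mathlib


open Matrix

/-- Index of a square matrix: least `d` with `rank (B^d) = rank (B^(d+1))`. -/
noncomputable def matInd {ι : Type*} [Fintype ι] [DecidableEq ι] (B : Matrix ι ι ℂ) : ℕ :=
  sInf {d : ℕ | (B ^ d).rank = (B ^ (d + 1)).rank}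

/-- `X` is the Moore-Penrose inverse of `A` (four Penrose equations). -/
noncomputable def IsMP {ι κ : Type*} [Fintype ι] [Fintype κ] (A : Matrix ι κ ℂ) (X : Matrix κ ι ℂ) : Prop :=
  A * X * A = A ∧ X * A * X = X ∧ (A * X)ᴴ = A * X ∧ (X * A)ᴴ = X * A

/-- Column space (range) of a matrix. -/
noncomputable def mrange {ι κ : Type*} [Fintype κ] (M : Matrix ι κ ℂ) : Submodule ℂ (ι → ℂ) :=
  LinearMap.range M.mulVecLin

/-- Null space of a matrix. -/
noncomputable def mker {ι κ : Type*} [Fintype κ] (M : Matrix ι κ ℂ) : Submodule ℂ (κ → ℂ) :=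
  LinearMap.ker M.mulVecLin

/-- `X` is the core-EP inverse of `B`. -/
noncomputable def IsCoreEP {ι : Type*} [Fintype ι] [DecidableEq ι] (B X : Matrix ι ι ℂ) : Prop :=
  X * B * X = X ∧ mrange X = mrange (B ^ matInd B) ∧ mrange Xᴴ = mrange (B ^ matInd B)

/-- `X` is the Drazin inverse of `B`. -/
noncomputable def IsDrazin {ι : Type*} [Fintype ι] [DecidableEq ι] (B X : Matrix ι ι ℂ) : Prop :=
  X * B * X = X ∧ B * X = X * B ∧ B ^ (matInd B + 1) * X = B ^ matInd B

/-- `X` is the group inverse of `B`. -/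
noncomputable def IsGroupInv {ι : Type*} [Fintype ι] (B X : Matrix ι ι ℂ) : Prop :=
  B * X * B = B ∧ X * B * X = X ∧ B * X = X * B

/-- Frobenius norm of a matrix. -/
noncomputable def frobNorm {ι κ : Type*} [Fintype ι] [Fintype κ] (M : Matrix ι κ ℂ) : ℝ :=
  Real.sqrt (∑ i, ∑ j, ‖M i j‖ ^ 2)

namespace StmtAux

variable {ι : Type*} [Fintype ι] [DecidableEq ι]

lemma rank_eq_finrank_mrange {κ : Type*} [Fintype κ] (M : Matrix ι κ ℂ) :
    M.rank = Module.finrank ℂ (mrange M) := rfl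

lemma mrange_mul {κ μ : Type*} [Fintype κ] [Fintype μ] (M : Matrix ι κ ℂ) (N : Matrix κ μ ℂ) :
    mrange (M * N) = (mrange N).map M.mulVecLin := by
  simp [mrange, Matrix.mulVecLin_mul, LinearMap.range_comp]

lemma matInd_spec (B : Matrix ι ι ℂ) :
    (B ^ matInd B).rank = (B ^ (matInd B + 1)).rank := by
  have hne : {d : ℕ | (B ^ d).rank = (B ^ (d + 1)).rank}.Nonempty := by
    by_contra h
    rw [Set.not_nonempty_iff_eq_empty] at h
    have key : ∀ j : ℕ, (B ^ j).rank + j ≤ (B ^ 0).rank := by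
      intro j
      induction j with
      | zero => simp
      | succ j ih =>
        have h1 : (B ^ (j + 1)).rank ≤ (B ^ j).rank := by
          rw [pow_succ]; exact Matrix.rank_mul_le_left _ _
        have h2 : (B ^ j).rank ≠ (B ^ (j + 1)).rank := by
          intro hc
          have : j ∈ {d : ℕ | (B ^ d).rank = (B ^ (d + 1)).rank} := hc
          rw [h] at this
          exact this
        omega
    have := key ((B ^ 0).rank + 1)
    omega
  exact Nat.sInf_mem hne

lemma mrange_pow_succ (B : Matrix ι ι ℂ) :
    mrange (B ^ (matInd B + 1)) = mrange (B ^ matInd B) := by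
  apply Submodule.eq_of_le_of_finrank_le
  · rw [pow_succ, mrange_mul]
    exact LinearMap.map_le_range
  · exact le_of_eq (matInd_spec B)

lemma map_mrange_pow (B : Matrix ι ι ℂ) :
    (mrange (B ^ matInd B)).map B.mulVecLin = mrange (B ^ matInd B) := by
  rw [← mrange_mul, ← pow_succ', mrange_pow_succ]

lemma mrange_pow_eq (B : Matrix ι ι ℂ) {j : ℕ} (hj : matInd B ≤ j) :
    mrange (B ^ j) = mrange (B ^ matInd B) := by
  obtain ⟨i, rfl⟩ := Nat.exists_eq_add_of_le hj
  clear hj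
  induction i with
  | zero => rfl
  | succ i ih =>
    have h1 : B ^ (matInd B + (i + 1)) = B * B ^ (matInd B + i) := by
      rw [show matInd B + (i + 1) = (matInd B + i) + 1 from rfl, pow_succ']
    rw [h1, mrange_mul, ih, map_mrange_pow]

lemma eq_of_mulVec_eq {κ : Type*} [Fintype κ] [DecidableEq κ] {M N : Matrix ι κ ℂ}
    (h : ∀ v, M.mulVec v = N.mulVec v) : M = N := by
  ext i j
  have := congrFun (h (Pi.single j 1)) i
  simpa using this

lemma mul_eq_self_of_range_le {κ : Type*} [Fintype κ] [DecidableEq κ]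
    (P : Matrix ι ι ℂ) (M : Matrix ι κ ℂ) (R : Submodule ℂ (ι → ℂ))
    (hfix : ∀ x ∈ R, P.mulVec x = x) (hM : mrange M ≤ R) : P * M = M := by
  apply eq_of_mulVec_eq
  intro v
  rw [← Matrix.mulVec_mulVec]
  exact hfix _ (hM ⟨v, Matrix.mulVecLin_apply _ _⟩)

end StmtAux

open StmtAux

theorem stmt2 {q n : ℕ} (A : Matrix (Fin q) (Fin n) ℂ) (W : Matrix (Fin n) (Fin q) ℂ)
    (hW : W ≠ 0) (m : ℕ) (hm : 0 < m) (k : ℕ)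
    (hk : k = max (matInd (A * W)) (matInd (W * A)))
    (Adag : Matrix (Fin n) (Fin q) ℂ) (hAdag : IsMP A Adag)
    (WAD : Matrix (Fin n) (Fin n) ℂ) (hWAD : IsDrazin (W * A) WAD)
    (WAcep : Matrix (Fin n) (Fin n) ℂ) (hWAcep : IsCoreEP (W * A) WAcep)
    (ADW AepW AWGm : Matrix (Fin q) (Fin n) ℂ) (AWGMP : Matrix (Fin n) (Fin q) ℂ)
    (hADW : ADW = A * (WAD * WAD))
    (hAepW : AepW = A * (WAcep * WAcep))
    (hAWGm : AWGm = (AepW * W) ^ m * AepW * (W * A) ^ m)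
    (hAWGMP : AWGMP = W * AWGm * W * A * Adag) :
    AWGMP.rank = (W * ADW).rank ∧ (W * ADW).rank = ((W * A) ^ k).rank := by
  obtain ⟨hA1, hA2, hA3, hA4⟩ := hAdag
  obtain ⟨hD1, hD2, hD3⟩ := hWAD
  obtain ⟨hY1, hY2, hY3⟩ := hWAcep
  set B : Matrix (Fin n) (Fin n) ℂ := W * A with hB
  set d : ℕ := matInd B with hd
  set X : Matrix (Fin n) (Fin n) ℂ := WAD with hX
  set Y : Matrix (Fin n) (Fin n) ℂ := WAcep with hYdef
  set R : Submodule ℂ ((Fin n) → ℂ) := mrange (B ^ d) with hR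
  -- basic consequence: A * (Adag * A) = A
  have hA1' : A * (Adag * A) = A := by rw [← Matrix.mul_assoc]; exact hA1
  -- W * ADW = X
  have hWADW : W * ADW = X := by
    rw [hADW]
    calc W * (A * (X * X)) = B * X * X := by simp [hB, Matrix.mul_assoc]
      _ = X * B * X := by rw [hD2]
      _ = X := hD1
  -- rank X = rank (B ^ d)
  have hXBX : ∀ j : ℕ, X * (B * X) ^ j = X := by
    intro j
    induction j with
    | zero => simp
    | succ j ih => rw [pow_succ, ← mul_assoc, ih, ← mul_assoc, hD1]
  have hXfact : X = X * B ^ d * X ^ d := by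
    rw [mul_assoc, ← Commute.mul_pow hD2, hXBX d]
  have hrankX : X.rank = (B ^ d).rank := by
    apply le_antisymm
    · calc X.rank = (X * B ^ d * X ^ d).rank := by rw [← hXfact]
        _ ≤ (X * B ^ d).rank := Matrix.rank_mul_le_left _ _
        _ ≤ (B ^ d).rank := Matrix.rank_mul_le_right _ _
    · calc (B ^ d).rank = (B ^ (d + 1) * X).rank := by rw [hD3]
        _ ≤ X.rank := Matrix.rank_mul_le_right _ _
  -- rank (B ^ k) = rank (B ^ d)
  have hdk : d ≤ k := by rw [hk, hd]; exact le_max_right _ _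
  have hrankk : ((B : Matrix (Fin n) (Fin n) ℂ) ^ k).rank = (B ^ d).rank := by
    rw [rank_eq_finrank_mrange, rank_eq_finrank_mrange, mrange_pow_eq B hdk]
  -- core-EP facts
  have hmapBR : R.map B.mulVecLin = R := map_mrange_pow B
  have hYR : mrange Y = R := hY2
  have hBYidem : (B * Y) * (B * Y) = B * Y := by
    rw [mul_assoc B Y (B * Y), ← mul_assoc Y B Y, hY1]
  have hrBY : mrange (B * Y) = R := by rw [mrange_mul, hYR, hmapBR]
  have hfixBY : ∀ x ∈ R, (B * Y).mulVec x = x := by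
    intro x hx
    rw [← hrBY] at hx
    obtain ⟨v, hv⟩ := hx
    rw [← hv, Matrix.mulVecLin_apply, Matrix.mulVec_mulVec, hBYidem]
  have hfixYB : ∀ x ∈ R, (Y * B).mulVec x = x := by
    intro x hx
    rw [← hYR] at hx
    obtain ⟨v, hv⟩ := hx
    rw [← hv, Matrix.mulVecLin_apply, Matrix.mulVec_mulVec, hY1]
  -- Claim A : B * Y * Y = Y
  have hBYY : (B * Y) * Y = Y :=
    mul_eq_self_of_range_le (B * Y) Y R hfixBY (le_of_eq hYR)
  -- W * AepW = Y
  have hWAepW : W * AepW = Y := by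
    rw [hAepW]
    calc W * (A * (Y * Y)) = (B * Y) * Y := by simp [hB, Matrix.mul_assoc]
      _ = Y := hBYY
  -- ranges of B^j * Y
  have hBjY : ∀ j : ℕ, mrange ((B ^ j) * Y) = R := by
    intro j
    induction j with
    | zero => simpa using hYR
    | succ j ih =>
      have : B ^ (j + 1) * Y = B * (B ^ j * Y) := by rw [← mul_assoc, ← pow_succ']
      rw [this, mrange_mul, ih, hmapBR]
  -- Claim B : Y^j * B^j * Y = Y
  have hYBY : ∀ j : ℕ, Y ^ j * B ^ j * Y = Y := by
    intro j
    induction j with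
    | zero => simp
    | succ j ih =>
      have h1 : (Y * B) * (B ^ j * Y) = B ^ j * Y :=
        mul_eq_self_of_range_le (Y * B) (B ^ j * Y) R hfixYB (le_of_eq (hBjY j))
      calc Y ^ (j + 1) * B ^ (j + 1) * Y
          = Y ^ j * ((Y * B) * (B ^ j * Y)) := by
            rw [pow_succ, pow_succ']
            simp [mul_assoc]
        _ = Y ^ j * (B ^ j * Y) := by rw [h1]
        _ = Y := by rw [← mul_assoc]; exact ih
  -- rank Y = rank (B ^ d)
  have hrankY : Y.rank = (B ^ d).rank := by
    rw [rank_eq_finrank_mrange Y, hYR, hR, rank_eq_finrank_mrange]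
  -- the main product
  have hswap : ∀ j : ℕ, W * (AepW * W) ^ j = (W * AepW) ^ j * W := by
    intro j
    induction j with
    | zero => simp
    | succ j ih =>
      calc W * (AepW * W) ^ (j + 1) = W * ((AepW * W) * (AepW * W) ^ j) := by rw [pow_succ']
        _ = (W * AepW) * (W * (AepW * W) ^ j) := by simp [Matrix.mul_assoc]
        _ = (W * AepW) * ((W * AepW) ^ j * W) := by rw [ih]
        _ = (W * AepW) ^ (j + 1) * W := by rw [pow_succ']; simp [Matrix.mul_assoc]
  have hWAWGm : W * AWGm = Y ^ (m + 1) * B ^ m := by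
    rw [hAWGm]
    calc W * ((AepW * W) ^ m * AepW * (W * A) ^ m)
        = (W * (AepW * W) ^ m) * AepW * (W * A) ^ m := by simp [Matrix.mul_assoc]
      _ = ((W * AepW) ^ m * W) * AepW * (W * A) ^ m := by rw [hswap]
      _ = ((W * AepW) ^ m * (W * AepW)) * (W * A) ^ m := by simp [Matrix.mul_assoc]
      _ = Y ^ (m + 1) * B ^ m := by rw [hWAepW, ← pow_succ, ← hB]
  set M : Matrix (Fin n) (Fin n) ℂ := Y ^ (m + 1) * B ^ (m + 1) with hM
  have hAWGMP2 : AWGMP = M * Adag := by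
    rw [hAWGMP, hWAWGm, hM]
    calc Y ^ (m + 1) * B ^ m * W * A * Adag
        = Y ^ (m + 1) * (B ^ m * (W * A)) * Adag := by simp [Matrix.mul_assoc]
      _ = Y ^ (m + 1) * B ^ (m + 1) * Adag := by rw [← hB, ← pow_succ]
  have hMA : AWGMP * A = M := by
    rw [hAWGMP2, hM, pow_succ, hB]
    calc Y ^ (m + 1) * ((W * A) ^ m * (W * A)) * Adag * A
        = Y ^ (m + 1) * ((W * A) ^ m * (W * (A * (Adag * A)))) := by simp [Matrix.mul_assoc]
      _ = Y ^ (m + 1) * ((W * A) ^ m * (W * A)) := by rw [hA1']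
  -- rank M = rank Y
  have hrankM : M.rank = Y.rank := by
    apply le_antisymm
    · calc M.rank ≤ (Y ^ (m + 1)).rank := Matrix.rank_mul_le_left _ _
        _ = (Y * Y ^ m).rank := by rw [← pow_succ']
        _ ≤ Y.rank := Matrix.rank_mul_le_left _ _
    · calc Y.rank = (M * Y).rank := by rw [hM, hYBY (m + 1)]
        _ ≤ M.rank := Matrix.rank_mul_le_left _ _
  -- rank AWGMP = rank M
  have hrankAWGMP : AWGMP.rank = M.rank := by
    apply le_antisymm
    · rw [hAWGMP2]; exact Matrix.rank_mul_le_left _ _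
    · calc M.rank = (AWGMP * A).rank := by rw [hMA]
        _ ≤ AWGMP.rank := Matrix.rank_mul_le_left _ _
  refine ⟨?_, ?_⟩
  · rw [hWADW, hrankAWGMP, hrankM, hrankY, hrankX]
  · rw [hWADW, hrankX, hrankk]
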